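/- (Existence of a hidden vertex) Let G be a connected simple graph on N ≥ 2 vertices with biased random walk matrix P^B, and for each vertex v let h_v : V → ℝ be a hitting-time solution with target v. Then there exists a vertex t such that h_v(t) ≤ h_t(v) for every vertex v, i.e., a vertex t with H(t,v) ≤ H(v,t) for all v. -/

import Mathlib

/-- The biased random walk transition matrix `P^B` of a graph `G` on `Fin N`:
`P^B i j = (1/N)(1/deg i + 1/deg j)` for edges, `P^B i i = 1 - 1/N - ∑_{k ∈ N_i} 1/(N deg k)`,
and `0` otherwise. -/
noncomputable def PB {N : ℕ} (G : SimpleGraph (Fin N)) [DecidableRel G.Adj]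
    (i j : Fin N) : ℝ :=
  if i = j then
    1 - 1 / (N : ℝ) - ∑ k ∈ G.neighborFinset i, 1 / ((N : ℝ) * (G.degree k : ℝ))
  else if G.Adj i j then
    (1 / (N : ℝ)) * (1 / (G.degree i : ℝ) + 1 / (G.degree j : ℝ))
  else 0

lemma PB_symm {N : ℕ} (G : SimpleGraph (Fin N)) [DecidableRel G.Adj] (i j : Fin N) :
    PB G i j = PB G j i := by
  unfold PB
  rcases eq_or_ne i j with rfl | hij
  · rfl
  · rw [if_neg hij, if_neg hij.symm]
    by_cases ha : G.Adj i j
    · rw [if_pos ha, if_pos ha.symm, add_comm]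
    · rw [if_neg ha, if_neg fun hc => ha hc.symm]

lemma PB_rowsum {N : ℕ} (G : SimpleGraph (Fin N)) [DecidableRel G.Adj]
    (hdeg : ∀ v, 0 < G.degree v) (hNpos : 0 < N) (i : Fin N) :
    ∑ j, PB G i j = 1 := by
  have hN : (N : ℝ) ≠ 0 := Nat.cast_ne_zero.mpr hNpos.ne'
  have hdi : (G.degree i : ℝ) ≠ 0 := Nat.cast_ne_zero.mpr (hdeg i).ne'
  have h1 : ∑ j, PB G i j = PB G i i + ∑ j ∈ Finset.univ.erase i, PB G i j :=
    (Finset.add_sum_erase _ _ (Finset.mem_univ i)).symm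
  have h2 : ∑ j ∈ Finset.univ.erase i, PB G i j
      = ∑ j ∈ Finset.univ.erase i,
          (if G.Adj i j then (1 / (N : ℝ)) * (1 / (G.degree i : ℝ) + 1 / (G.degree j : ℝ)) else 0) := by
    refine Finset.sum_congr rfl fun j hj => ?_
    have : i ≠ j := fun hc => (Finset.mem_erase.mp hj).1 hc.symm
    simp [PB, this]
  have h3 : ∑ j ∈ Finset.univ.erase i,
          (if G.Adj i j then (1 / (N : ℝ)) * (1 / (G.degree i : ℝ) + 1 / (G.degree j : ℝ)) else 0)
      = ∑ j,
          (if G.Adj i j then (1 / (N : ℝ)) * (1 / (G.degree i : ℝ) + 1 / (G.degree j : ℝ)) else 0) := by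
    apply Finset.sum_erase
    simp
  have h4 : ∑ j,
          (if G.Adj i j then (1 / (N : ℝ)) * (1 / (G.degree i : ℝ) + 1 / (G.degree j : ℝ)) else 0)
      = ∑ j ∈ G.neighborFinset i, (1 / (N : ℝ)) * (1 / (G.degree i : ℝ) + 1 / (G.degree j : ℝ)) := by
    rw [SimpleGraph.neighborFinset_eq_filter, Finset.sum_filter]
  have h5 : ∑ j ∈ G.neighborFinset i, (1 / (N : ℝ)) * (1 / (G.degree i : ℝ) + 1 / (G.degree j : ℝ))
      = 1 / (N : ℝ) + ∑ k ∈ G.neighborFinset i, 1 / ((N : ℝ) * (G.degree k : ℝ)) := by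
    have : ∀ j ∈ G.neighborFinset i,
        (1 / (N : ℝ)) * (1 / (G.degree i : ℝ) + 1 / (G.degree j : ℝ))
        = 1 / ((N : ℝ) * (G.degree i : ℝ)) + 1 / ((N : ℝ) * (G.degree j : ℝ)) := by
      intro j _
      rw [mul_add, one_div_mul_one_div, one_div_mul_one_div]
    rw [Finset.sum_congr rfl this, Finset.sum_add_distrib, Finset.sum_const,
      G.card_neighborFinset_eq_degree, nsmul_eq_mul]
    congr 1
    field_simp
  have hdiag : PB G i i
      = 1 - 1 / (N : ℝ) - ∑ k ∈ G.neighborFinset i, 1 / ((N : ℝ) * (G.degree k : ℝ)) := by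
    simp [PB]
  rw [h1, h2, h3, h4, h5, hdiag]; ring

/-- Existence of a hidden vertex: for a connected simple graph on `N ≥ 2`
vertices and a family `h` of hitting-time solutions of the biased random walk
(`h v u = H(u, v)`), there exists a vertex `t` with `H(t, v) ≤ H(v, t)` for all `v`,
i.e. `h v t ≤ h t v` for every vertex `v`. -/
theorem exists_hidden_vertex {N : ℕ} (hN : 2 ≤ N)
    (G : SimpleGraph (Fin N)) [DecidableRel G.Adj] (hconn : G.Connected)
    (h : Fin N → Fin N → ℝ) (h0 : ∀ v, h v v = 0)
    (hrec : ∀ v x, x ≠ v → h v x = 1 + ∑ z, PB G x z * h v z) :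
    ∃ t, ∀ v, h v t ≤ h t v := by
  have hNpos : 0 < N := by omega
  have hcard : 1 < Fintype.card (Fin N) := by rw [Fintype.card_fin]; omega
  have hdeg : ∀ v, 0 < G.degree v := by
    intro v
    rw [SimpleGraph.degree_pos_iff_exists_adj]
    obtain ⟨w, hw⟩ := Fintype.exists_ne_of_one_lt_card hcard v
    obtain ⟨p⟩ := hconn.preconnected v w
    cases p with
    | nil => exact absurd rfl hw
    | cons ha _ => exact ⟨_, ha⟩
  have hcol : ∀ j, ∑ i, PB G i j = 1 := by
    intro j
    calc ∑ i, PB G i j = ∑ i, PB G j i := Finset.sum_congr rfl fun i _ => PB_symm G i j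
    _ = 1 := PB_rowsum G hdeg hNpos j
  set u : Fin N → Fin N → ℝ := fun y x => h y x - ∑ z, PB G x z * h y z with hu
  have hu1 : ∀ y x, x ≠ y → u y x = 1 := by
    intro y x hxy
    have := hrec y x hxy
    simp only [hu]
    linarith
  have husum : ∀ y, ∑ x, u y x = 0 := by
    intro y
    simp only [hu]
    rw [Finset.sum_sub_distrib, Finset.sum_comm]
    have : ∀ z : Fin N, ∑ x, PB G x z * h y z = h y z := by
      intro z
      rw [← Finset.sum_mul, hcol, one_mul]
    rw [Finset.sum_congr rfl fun z _ => this z, sub_self]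
  have huy : ∀ y, u y y = 1 - (N : ℝ) := by
    intro y
    have h1 : ∑ x, u y x = u y y + ∑ x ∈ Finset.univ.erase y, u y x :=
      (Finset.add_sum_erase _ _ (Finset.mem_univ y)).symm
    have h2 : ∑ x ∈ Finset.univ.erase y, u y x = (N : ℝ) - 1 := by
      rw [Finset.sum_congr rfl fun x hx => hu1 y x (Finset.mem_erase.mp hx).1,
        Finset.sum_const, Finset.card_erase_of_mem (Finset.mem_univ y), Finset.card_univ]
      simp [Nat.cast_sub (by omega : 1 ≤ N)]
    have := husum y
    rw [h1, h2] at this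
    linarith
  have hA : ∀ x y : Fin N, ∑ z, u y z * h x z = ∑ z, h x z - (N : ℝ) * h x y := by
    intro x y
    have h1 : ∑ z, u y z * h x z
        = u y y * h x y + ∑ z ∈ Finset.univ.erase y, u y z * h x z :=
      (Finset.add_sum_erase _ _ (Finset.mem_univ y)).symm
    have h2 : ∑ z ∈ Finset.univ.erase y, u y z * h x z
        = ∑ z ∈ Finset.univ.erase y, h x z := by
      refine Finset.sum_congr rfl fun z hz => ?_
      rw [hu1 y z (Finset.mem_erase.mp hz).1, one_mul]
    have h3 : ∑ z ∈ Finset.univ.erase y, h x z = ∑ z, h x z - h x y := by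
      rw [Finset.sum_erase_eq_sub (Finset.mem_univ y)]
    rw [h1, h2, h3, huy y]; ring
  have hB : ∀ x y : Fin N, ∑ z, u y z * h x z = ∑ z, u x z * h y z := by
    intro x y
    simp only [hu, sub_mul, Finset.sum_sub_distrib, Finset.sum_mul]
    congr 1
    · exact Finset.sum_congr rfl fun z _ => mul_comm _ _
    · rw [Finset.sum_comm]
      refine Finset.sum_congr rfl fun z _ => Finset.sum_congr rfl fun w _ => ?_
      rw [PB_symm G w z]; ring
  have key : ∀ x y : Fin N, ∑ z, h x z - (N : ℝ) * h x y = ∑ z, h y z - (N : ℝ) * h y x := by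
    intro x y
    rw [← hA x y, hB x y, hA y x]
  obtain ⟨t, -, ht⟩ := Finset.exists_max_image Finset.univ (fun v => ∑ z, h v z)
    ⟨⟨0, hNpos⟩, Finset.mem_univ _⟩
  refine ⟨t, fun v => ?_⟩
  have h1 := key t v
  have h2 : ∑ z, h v z ≤ ∑ z, h t z := ht v (Finset.mem_univ v)
  have hNR : (0 : ℝ) < (N : ℝ) := by exact_mod_cast hNpos
  nlinarith [mul_le_mul_of_nonneg_left (sub_nonneg.mpr h2) (le_of_lt hNR)]
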